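/- Suppose a bilinear form L on a finite-dimensional Hilbert space X is bounded with constant β and inf-sup stable with constant γ > 0, and let M : X* → X be SPD with c₁‖x‖² ≤ ‖x‖²_{M⁻¹} ≤ c₂‖x‖². Then the condition number of MA, measured in the M⁻¹-inner product, satisfies κ(MA) ≤ (c₂ β)/(c₁ γ), where A is the operator induced by L. -/

import Mathlib

open Matrix

lemma psd_nonneg {n : ℕ} {M : Matrix (Fin n) (Fin n) ℝ} (hM : M.PosDef)
    (x : Fin n → ℝ) : 0 ≤ x ⬝ᵥ (M *ᵥ x) := by
  have := hM.posSemidef.dotProduct_mulVec_nonneg x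
  simpa using this

lemma cs_lemma {n : ℕ} {M : Matrix (Fin n) (Fin n) ℝ} (hM : M.PosDef)
    (y z : Fin n → ℝ) :
    (y ⬝ᵥ (M *ᵥ z))^2 ≤ (y ⬝ᵥ (M *ᵥ y)) * (z ⬝ᵥ (M *ᵥ z)) := by
  have hsym : ∀ u v : Fin n → ℝ, u ⬝ᵥ (M *ᵥ v) = v ⬝ᵥ (M *ᵥ u) := by
    intro u v
    have hMt : Mᵀ = M := by
      have := hM.isHermitian
      simpa [Matrix.IsHermitian, Matrix.conjTranspose_eq_transpose_of_trivial] using this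
    calc u ⬝ᵥ (M *ᵥ v) = (Mᵀ *ᵥ u) ⬝ᵥ v := by
          rw [Matrix.dotProduct_mulVec, ← Matrix.mulVec_transpose]
      _ = v ⬝ᵥ (M *ᵥ u) := by rw [hMt, dotProduct_comm]
  have key : ∀ t : ℝ, 0 ≤ (z ⬝ᵥ (M *ᵥ z)) * (t * t) + (2 * (y ⬝ᵥ (M *ᵥ z))) * t
      + (y ⬝ᵥ (M *ᵥ y)) := by
    intro t
    have h := psd_nonneg hM (y + t • z)
    have hexp : (y + t • z) ⬝ᵥ (M *ᵥ (y + t • z)) =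
        (z ⬝ᵥ (M *ᵥ z)) * (t * t) + (2 * (y ⬝ᵥ (M *ᵥ z))) * t + (y ⬝ᵥ (M *ᵥ y)) := by
      rw [Matrix.mulVec_add, Matrix.mulVec_smul]
      simp only [add_dotProduct, dotProduct_add, smul_dotProduct,
        dotProduct_smul, smul_eq_mul]
      rw [hsym z y]
      ring
    linarith [hexp ▸ h]
  have hd := discrim_le_zero key
  have : discrim (z ⬝ᵥ (M *ᵥ z)) (2 * (y ⬝ᵥ (M *ᵥ z))) (y ⬝ᵥ (M *ᵥ y)) =
      (2 * (y ⬝ᵥ (M *ᵥ z)))^2 - 4 * (z ⬝ᵥ (M *ᵥ z)) * (y ⬝ᵥ (M *ᵥ y)) := rfl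
  rw [this] at hd
  nlinarith [hd]

theorem condition_number_bound (n : ℕ)
    (K Minv : Matrix (Fin n) (Fin n) ℝ) (hMinv : Minv.PosDef)
    (β γ c₁ c₂ : ℝ) (hβ : 0 < β) (hγ : 0 < γ) (hc₁ : 0 < c₁) (hc₂ : 0 < c₂)
    (hbound : ∀ x y : Fin n → ℝ,
      |x ⬝ᵥ (K *ᵥ y)| ≤ β * Real.sqrt (x ⬝ᵥ x) * Real.sqrt (y ⬝ᵥ y))
    (hinfsup : ∀ x : Fin n → ℝ, ∃ y : Fin n → ℝ, y ≠ 0 ∧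
      γ * Real.sqrt (x ⬝ᵥ x) * Real.sqrt (y ⬝ᵥ y) ≤ x ⬝ᵥ (K *ᵥ y))
    (hsymm : K.IsSymm)
    (hequiv : ∀ x : Fin n → ℝ,
      c₁ * (x ⬝ᵥ x) ≤ x ⬝ᵥ (Minv *ᵥ x) ∧ x ⬝ᵥ (Minv *ᵥ x) ≤ c₂ * (x ⬝ᵥ x)) :
    ∃ C₁ C₂ : ℝ, C₁ * C₂ ≤ (c₂ * β) / (c₁ * γ) ∧
      (∀ x : Fin n → ℝ,
        Real.sqrt (((Minv⁻¹ * K) *ᵥ x) ⬝ᵥ (Minv *ᵥ ((Minv⁻¹ * K) *ᵥ x))) ≤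
          C₁ * Real.sqrt (x ⬝ᵥ (Minv *ᵥ x))) ∧
      (∀ x : Fin n → ℝ,
        Real.sqrt (x ⬝ᵥ (Minv *ᵥ x)) ≤
          C₂ * Real.sqrt (((Minv⁻¹ * K) *ᵥ x) ⬝ᵥ (Minv *ᵥ ((Minv⁻¹ * K) *ᵥ x)))) := by
  have hMunit : IsUnit Minv.det := isUnit_iff_ne_zero.mpr hMinv.det_pos.ne'
  -- key simplification : Minv *ᵥ ((Minv⁻¹ * K) *ᵥ x) = K *ᵥ x
  have hsimp : ∀ x : Fin n → ℝ, Minv *ᵥ ((Minv⁻¹ * K) *ᵥ x) = K *ᵥ x := by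
    intro x
    rw [Matrix.mulVec_mulVec, ← Matrix.mul_assoc, Matrix.mul_nonsing_inv _ hMunit,
      Matrix.one_mul]
  set N : (Fin n → ℝ) → ℝ := fun x => Real.sqrt (x ⬝ᵥ (Minv *ᵥ x)) with hN
  have hNnn : ∀ x, 0 ≤ N x := fun x => Real.sqrt_nonneg _
  have hNsq : ∀ x, N x ^ 2 = x ⬝ᵥ (Minv *ᵥ x) := by
    intro x
    exact Real.sq_sqrt (psd_nonneg hMinv x)
  -- norm of euclidean
  have hE : ∀ x : Fin n → ℝ, 0 ≤ x ⬝ᵥ x := fun x => Finset.sum_nonneg fun i _ => mul_self_nonneg (x i)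
  -- euclidean norm bounds: sqrt(x⬝x) ≤ N x / sqrt c₁ and N x ≤ sqrt c₂ * sqrt(x⬝x)
  have hlow : ∀ x : Fin n → ℝ, Real.sqrt c₁ * Real.sqrt (x ⬝ᵥ x) ≤ N x := by
    intro x
    rw [← Real.sqrt_mul hc₁.le]
    exact Real.sqrt_le_sqrt (hequiv x).1
  have hhigh : ∀ x : Fin n → ℝ, N x ≤ Real.sqrt c₂ * Real.sqrt (x ⬝ᵥ x) := by
    intro x
    rw [← Real.sqrt_mul hc₂.le]
    exact Real.sqrt_le_sqrt (hequiv x).2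
  have hKsym : ∀ u v : Fin n → ℝ, u ⬝ᵥ (K *ᵥ v) = v ⬝ᵥ (K *ᵥ u) := by
    intro u v
    have hKt : Kᵀ = K := by
      simpa [Matrix.IsSymm] using hsymm
    calc u ⬝ᵥ (K *ᵥ v) = (Kᵀ *ᵥ u) ⬝ᵥ v := by
          rw [Matrix.dotProduct_mulVec, ← Matrix.mulVec_transpose]
      _ = v ⬝ᵥ (K *ᵥ u) := by rw [hKt, dotProduct_comm]
  refine ⟨β / c₁, c₂ / γ, ?_, ?_, ?_⟩
  · rw [div_mul_div_comm]
    apply le_of_eq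
    field_simp
  · -- upper bound : N z ≤ (β/c₁) N x
    intro x
    set z := (Minv⁻¹ * K) *ᵥ x with hz
    show N z ≤ β / c₁ * N x
    have hzz : N z ^ 2 = z ⬝ᵥ (K *ᵥ x) := by rw [hNsq, hsimp]
    have h1 : z ⬝ᵥ (K *ᵥ x) ≤ β * Real.sqrt (z ⬝ᵥ z) * Real.sqrt (x ⬝ᵥ x) :=
      le_trans (le_abs_self _) (hbound z x)
    have h2 : Real.sqrt c₁ * Real.sqrt (z ⬝ᵥ z) ≤ N z := hlow z
    have h3 : Real.sqrt c₁ * Real.sqrt (x ⬝ᵥ x) ≤ N x := hlow x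
    have hc1s : 0 < Real.sqrt c₁ := Real.sqrt_pos.mpr hc₁
    have hc1sq : Real.sqrt c₁ * Real.sqrt c₁ = c₁ := Real.mul_self_sqrt hc₁.le
    -- N z ^ 2 * c₁ ≤ β * N z * N x
    have key : c₁ * N z ^ 2 ≤ β * (N z * N x) := by
      have : c₁ * N z ^ 2 ≤ β * ((Real.sqrt c₁ * Real.sqrt (z ⬝ᵥ z)) *
          (Real.sqrt c₁ * Real.sqrt (x ⬝ᵥ x))) := by
        rw [hzz]
        nlinarith [Real.sqrt_nonneg (z ⬝ᵥ z), Real.sqrt_nonneg (x ⬝ᵥ x)]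
      refine this.trans ?_
      have := mul_le_mul h2 h3 (by positivity) (hNnn z)
      nlinarith
    rcases eq_or_lt_of_le (hNnn z) with h0 | h0
    · rw [← h0]; positivity
    · rw [div_mul_eq_mul_div, le_div_iff₀ hc₁]
      nlinarith
  · -- lower bound : N x ≤ (c₂/γ) N z
    intro x
    set z := (Minv⁻¹ * K) *ᵥ x with hz
    show N x ≤ c₂ / γ * N z
    obtain ⟨y, hy0, hy⟩ := hinfsup x
    have hyy : 0 < y ⬝ᵥ y := by
      rcases eq_or_lt_of_le (hE y) with h0 | h0
      · exfalso; exact hy0 ((dotProduct_self_eq_zero).mp h0.symm)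
      · exact h0
    have hys : 0 < Real.sqrt (y ⬝ᵥ y) := Real.sqrt_pos.mpr hyy
    -- x ⬝ K y = y ⬝ Minv z
    have hxKy : x ⬝ᵥ (K *ᵥ y) = y ⬝ᵥ (Minv *ᵥ z) := by
      rw [hKsym x y, hz, hsimp]
    -- Cauchy-Schwarz
    have hcs : (y ⬝ᵥ (Minv *ᵥ z))^2 ≤ (y ⬝ᵥ (Minv *ᵥ y)) * (z ⬝ᵥ (Minv *ᵥ z)) :=
      cs_lemma hMinv y z
    have hNy : y ⬝ᵥ (Minv *ᵥ y) ≤ c₂ * (y ⬝ᵥ y) := (hequiv y).2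
    have hzMz : z ⬝ᵥ (Minv *ᵥ z) = N z ^ 2 := (hNsq z).symm
    have hcs2 : y ⬝ᵥ (Minv *ᵥ z) ≤ Real.sqrt c₂ * Real.sqrt (y ⬝ᵥ y) * N z := by
      have hb : (y ⬝ᵥ (Minv *ᵥ z))^2 ≤ (Real.sqrt c₂ * Real.sqrt (y ⬝ᵥ y) * N z)^2 := by
        have : (Real.sqrt c₂ * Real.sqrt (y ⬝ᵥ y) * N z)^2 = c₂ * (y ⬝ᵥ y) * N z ^ 2 := by
          rw [mul_pow, mul_pow, Real.sq_sqrt hc₂.le, Real.sq_sqrt hyy.le]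
        rw [this, ← hzMz]
        nlinarith [psd_nonneg hMinv z]
      have hnn : 0 ≤ Real.sqrt c₂ * Real.sqrt (y ⬝ᵥ y) * N z := by positivity
      calc y ⬝ᵥ (Minv *ᵥ z) ≤ |y ⬝ᵥ (Minv *ᵥ z)| := le_abs_self _
        _ = Real.sqrt ((y ⬝ᵥ (Minv *ᵥ z))^2) := (Real.sqrt_sq_eq_abs _).symm
        _ ≤ Real.sqrt ((Real.sqrt c₂ * Real.sqrt (y ⬝ᵥ y) * N z)^2) := Real.sqrt_le_sqrt hb
        _ = Real.sqrt c₂ * Real.sqrt (y ⬝ᵥ y) * N z := Real.sqrt_sq hnn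
    -- combine:  γ * (N x / √c₂) * √(y⬝y) ≤ √c₂ * √(y⬝y) * N z
    have hxlow : N x ≤ Real.sqrt c₂ * Real.sqrt (x ⬝ᵥ x) := hhigh x
    have hc2s : 0 < Real.sqrt c₂ := Real.sqrt_pos.mpr hc₂
    have hc2sq : Real.sqrt c₂ * Real.sqrt c₂ = c₂ := Real.mul_self_sqrt hc₂.le
    have hchain : γ * Real.sqrt (x ⬝ᵥ x) * Real.sqrt (y ⬝ᵥ y) ≤
        Real.sqrt c₂ * Real.sqrt (y ⬝ᵥ y) * N z := by
      calc γ * Real.sqrt (x ⬝ᵥ x) * Real.sqrt (y ⬝ᵥ y) ≤ x ⬝ᵥ (K *ᵥ y) := hy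
        _ = y ⬝ᵥ (Minv *ᵥ z) := hxKy
        _ ≤ Real.sqrt c₂ * Real.sqrt (y ⬝ᵥ y) * N z := hcs2
    -- γ * N x / √c₂ ≤ √c₂ * N z,  i.e. γ N x ≤ c₂ N z
    have hfin : γ * N x ≤ c₂ * N z := by
      have h1 : γ * N x * Real.sqrt (y ⬝ᵥ y) ≤ c₂ * N z * Real.sqrt (y ⬝ᵥ y) := by
        have h2 : γ * N x ≤ γ * (Real.sqrt c₂ * Real.sqrt (x ⬝ᵥ x)) :=
          mul_le_mul_of_nonneg_left hxlow hγ.le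
        have hA := mul_le_mul_of_nonneg_right h2 hys.le
        have hB := mul_le_mul_of_nonneg_left hchain hc2s.le
        have hB' : Real.sqrt c₂ * (Real.sqrt c₂ * Real.sqrt (y ⬝ᵥ y) * N z)
            = c₂ * N z * Real.sqrt (y ⬝ᵥ y) := by
          linear_combination (Real.sqrt (y ⬝ᵥ y) * N z) * hc2sq
        nlinarith [hA, hB, hB']
      exact le_of_mul_le_mul_right h1 hys
    rw [div_mul_eq_mul_div, le_div_iff₀ hγ]
    linarith
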